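/- Let d_{kl} ≥ 0 for k ≠ l be variables, ν > 0, t_{kl} = (1 + d_{kl}²/ν)^{−(ν+1)/2}, Z = Σ_{k≠l} t_{kl}, and q_{ij} = t_{ij}/Z. Given constants p_{kl} ≥ 0 with Σ_{k≠l} p_{kl} = 1, the partial derivative of L = −Σ_{k≠l} p_{kl} ln q_{kl} with respect to d_{ij} equals ((ν+1)/ν)·(p_{ij} − q_{ij})·d_{ij}·(1 + d_{ij}²/ν)^{−1}. -/

import Mathlib

open Finset

theorem tsne_gradient_corrected {ι : Type*} [Fintype ι] [DecidableEq ι]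
    (d p : ι → ℝ) (ν : ℝ) (hν : 0 < ν) (hd : ∀ k, 0 ≤ d k)
    (hp : ∀ k, 0 ≤ p k) (hsum : ∑ k, p k = 1) (i0 : ι) :
    HasDerivAt
      (fun s : ℝ =>
        -∑ k, p k * Real.log
          ((1 + (Function.update d i0 s k) ^ 2 / ν) ^ (-(ν + 1) / 2) /
            ∑ l, (1 + (Function.update d i0 s l) ^ 2 / ν) ^ (-(ν + 1) / 2)))
      (((ν + 1) / ν) *
        (p i0 -
          (1 + (d i0) ^ 2 / ν) ^ (-(ν + 1) / 2) /
            ∑ l, (1 + (d l) ^ 2 / ν) ^ (-(ν + 1) / 2)) *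
        (d i0) * (1 + (d i0) ^ 2 / ν)⁻¹)
      (d i0) := by
  have hν' : ν ≠ 0 := hν.ne'
  set e : ℝ := -(ν + 1) / 2 with he
  have hg : ∀ s : ℝ, (0:ℝ) < 1 + s ^ 2 / ν := fun s => by positivity
  set x := d i0 with hx
  have hgx : (0:ℝ) < 1 + x ^ 2 / ν := hg x
  set C2 : ℝ := ∑ l ∈ univ.erase i0, (1 + (d l) ^ 2 / ν) ^ e with hC2def
  have hC2 : 0 ≤ C2 := Finset.sum_nonneg fun l _ => (Real.rpow_pos_of_pos (hg _) _).le
  set C1 : ℝ := ∑ k ∈ univ.erase i0, p k * Real.log ((1 + (d k) ^ 2 / ν) ^ e) with hC1def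
  set T : ℝ := (1 + x ^ 2 / ν) ^ e with hT
  have hTpos : 0 < T := Real.rpow_pos_of_pos hgx e
  have hZpos : 0 < T + C2 := lt_of_lt_of_le hTpos (le_add_of_nonneg_right hC2)
  have hfun : (fun s : ℝ => -∑ k, p k * Real.log
          ((1 + (Function.update d i0 s k) ^ 2 / ν) ^ e /
            ∑ l, (1 + (Function.update d i0 s l) ^ 2 / ν) ^ e))
      = fun s : ℝ => -(p i0 * Real.log ((1 + s ^ 2 / ν) ^ e) + C1)
          + Real.log ((1 + s ^ 2 / ν) ^ e + C2) := by
    funext s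
    have hZ : ∑ l, (1 + (Function.update d i0 s l) ^ 2 / ν) ^ e
        = (1 + s ^ 2 / ν) ^ e + C2 := by
      rw [← Finset.add_sum_erase _ _ (mem_univ i0), Function.update_self]
      congr 1
      refine Finset.sum_congr rfl fun l hl => ?_
      rw [Function.update_of_ne (Finset.ne_of_mem_erase hl)]
    rw [hZ]
    have hZspos : 0 < (1 + s ^ 2 / ν) ^ e + C2 :=
      lt_of_lt_of_le (Real.rpow_pos_of_pos (hg s) e) (le_add_of_nonneg_right hC2)
    have hterm : ∀ k, p k * Real.log ((1 + (Function.update d i0 s k) ^ 2 / ν) ^ e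
          / ((1 + s ^ 2 / ν) ^ e + C2))
        = p k * Real.log ((1 + (Function.update d i0 s k) ^ 2 / ν) ^ e)
          - p k * Real.log ((1 + s ^ 2 / ν) ^ e + C2) := by
      intro k
      rw [Real.log_div (Real.rpow_pos_of_pos (hg _) e).ne' hZspos.ne', mul_sub]
    simp_rw [hterm]
    rw [Finset.sum_sub_distrib, ← Finset.sum_mul, hsum, one_mul,
      ← Finset.add_sum_erase _
        (fun k => p k * Real.log ((1 + (Function.update d i0 s k) ^ 2 / ν) ^ e))
        (mem_univ i0), Function.update_self]
    have hrest : ∑ k ∈ univ.erase i0,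
        p k * Real.log ((1 + (Function.update d i0 s k) ^ 2 / ν) ^ e) = C1 := by
      refine Finset.sum_congr rfl fun k hk => ?_
      rw [Function.update_of_ne (Finset.ne_of_mem_erase hk)]
    rw [hrest]
    ring
  rw [hfun]
  have hZs : ∑ l, (1 + (d l) ^ 2 / ν) ^ e = T + C2 := by
    rw [← Finset.add_sum_erase _ _ (mem_univ i0)]
  rw [hZs]
  have h1 : HasDerivAt (fun s : ℝ => 1 + s ^ 2 / ν) (2 * x / ν) x := by
    have := ((hasDerivAt_pow 2 x).div_const ν).const_add 1
    simpa using this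
  have h2 : HasDerivAt (fun s : ℝ => (1 + s ^ 2 / ν) ^ e)
      (e * (1 + x ^ 2 / ν) ^ (e - 1) * (2 * x / ν)) x := by
    have := h1.rpow_const (p := e) (Or.inl hgx.ne')
    convert this using 1
    ring
  have h3 : HasDerivAt (fun s : ℝ => Real.log ((1 + s ^ 2 / ν) ^ e))
      ((e * (1 + x ^ 2 / ν) ^ (e - 1) * (2 * x / ν)) / T) x := h2.log hTpos.ne'
  have h4 : HasDerivAt (fun s : ℝ => Real.log ((1 + s ^ 2 / ν) ^ e + C2))
      ((e * (1 + x ^ 2 / ν) ^ (e - 1) * (2 * x / ν)) / (T + C2)) x :=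
    (h2.add_const C2).log hZpos.ne'
  have h5 := (((h3.const_mul (p i0)).add_const C1).neg).add h4
  convert h5 using 1
  case e'_4 => rfl
  case e'_5 => rfl
  case e'_8 => rfl
  have hpow : (1 + x ^ 2 / ν) ^ (e - 1) = T / (1 + x ^ 2 / ν) := by
    rw [hT, Real.rpow_sub hgx, Real.rpow_one]
  rw [hpow, he]
  field_simp
  ring
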